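/- arXiv:1507.06772 — 5 statements merged into one kernel-verified Lean document; each statement's English description precedes it below -/
import Mathlib

section
/- Let ε_st > ε_∞ > 0, ω_T > 0, c > 0 and k > 0 be real numbers, set ω_L := ω_T·√(ε_st/ε_∞), and let X₋ ≤ X₊ be the two real roots of P(X) = ε_∞·X² − (ε_st·ω_T² + c²·k²)·X + c²·k²·ω_T². Then X₋ < ω_T² and X₊ > ω_L². In particular neither root lies in the closed interval [ω_T², ω_L²]. -/
/-- The two roots `X₋ ≤ X₊` of the polariton dispersion quadratic
`P(X) = ε_∞ X² - (ε_st ω_T² + c²k²) X + c²k²ω_T²` satisfy `X₋ < ω_T²` and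
`X₊ > ω_L²` where `ω_L = ω_T √(ε_st/ε_∞)`; in particular neither root lies in
the closed interval `[ω_T², ω_L²]`. -/
theorem dispersion_roots_avoid_stop_band (εst εinf ωT c k : ℝ)
    (hinf : 0 < εinf) (hst : εinf < εst) (hωT : 0 < ωT) (hc : 0 < c) (hk : 0 < k)
    (ωL : ℝ) (hωL : ωL = ωT * Real.sqrt (εst / εinf))
    (P : ℝ → ℝ)
    (hP : ∀ X : ℝ, P X = εinf * X ^ 2 - (εst * ωT ^ 2 + c ^ 2 * k ^ 2) * X
      + c ^ 2 * k ^ 2 * ωT ^ 2)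
    (Xm Xp : ℝ) (hle : Xm ≤ Xp) (hm : P Xm = 0) (hp : P Xp = 0)
    (hroots : ∀ X : ℝ, P X = 0 → X = Xm ∨ X = Xp) :
    Xm < ωT ^ 2 ∧ Xp > ωL ^ 2 ∧
      Xm ∉ Set.Icc (ωT ^ 2) (ωL ^ 2) ∧ Xp ∉ Set.Icc (ωT ^ 2) (ωL ^ 2) := by
  have hεi : εinf ≠ 0 := ne_of_gt hinf
  rw [hP] at hm hp
  set e := εst * ωT ^ 2 + c ^ 2 * k ^ 2 with he
  -- ωL² = ωT² * (εst / εinf)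
  have hsq : ωL ^ 2 = ωT ^ 2 * (εst / εinf) := by
    rw [hωL, mul_pow, Real.sq_sqrt (div_nonneg (le_of_lt (hinf.trans hst)) hinf.le)]
  -- the reflected points are also roots
  have hreflm : P (e / εinf - Xm) = 0 := by
    rw [hP]; field_simp; linear_combination εinf * hm
  have hreflp : P (e / εinf - Xp) = 0 := by
    rw [hP]; field_simp; linear_combination εinf * hp
  -- Vieta: sum of roots
  have hsum : εinf * (Xm + Xp) = e := by
    rcases hroots _ hreflm with h | h
    · rcases hroots _ hreflp with h2 | h2
      · field_simp at h h2; ring_nf at h h2 ⊢; linarith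
      · field_simp at h h2; ring_nf at h h2 ⊢; linarith
    · field_simp at h; ring_nf at h ⊢; linarith
  -- Vieta: product of roots
  have hprod : εinf * (Xm * Xp) = c ^ 2 * k ^ 2 * ωT ^ 2 := by
    linear_combination Xm * hsum - hm
  -- factorization
  have hfac : ∀ X : ℝ, P X = εinf * (X - Xm) * (X - Xp) := by
    intro X
    rw [hP]
    linear_combination X * hsum - hprod
  -- P is negative at ωT²
  have hT : εinf * (ωT ^ 2 - Xm) * (ωT ^ 2 - Xp) < 0 := by
    rw [← hfac, hP]
    nlinarith [mul_pos (sub_pos.mpr hst) (pow_pos hωT 4)]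
  -- P is negative at ωL²
  have hPL : P (ωL ^ 2) * εinf = c ^ 2 * k ^ 2 * ωT ^ 2 * (εinf - εst) := by
    rw [hP, hsq]; field_simp; ring
  have hnegL : P (ωL ^ 2) < 0 := by
    have hRHS : c ^ 2 * k ^ 2 * ωT ^ 2 * (εinf - εst) < 0 := by
      have : (0:ℝ) < c ^ 2 * k ^ 2 * ωT ^ 2 := by positivity
      nlinarith
    by_contra h
    push_neg at h
    nlinarith [mul_nonneg h hinf.le]
  have hL : εinf * (ωL ^ 2 - Xm) * (ωL ^ 2 - Xp) < 0 := by
    rw [← hfac]; exact hnegL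
  have h1 : Xm < ωT ^ 2 := by
    by_contra h
    push_neg at h
    have h' : 0 ≤ (Xm - ωT ^ 2) * (Xp - ωT ^ 2) :=
      mul_nonneg (by linarith) (by linarith)
    have heq : εinf * (ωT ^ 2 - Xm) * (ωT ^ 2 - Xp)
        = εinf * ((Xm - ωT ^ 2) * (Xp - ωT ^ 2)) := by ring
    have hC : 0 ≤ εinf * (ωT ^ 2 - Xm) * (ωT ^ 2 - Xp) := by
      rw [heq]; exact mul_nonneg hinf.le h'
    linarith
  have h2 : ωL ^ 2 < Xp := by
    by_contra h
    push_neg at h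
    have hC : 0 ≤ εinf * (ωL ^ 2 - Xm) * (ωL ^ 2 - Xp) :=
      mul_nonneg (mul_nonneg hinf.le (sub_nonneg.mpr (hle.trans h)))
        (sub_nonneg.mpr h)
    linarith
  refine ⟨h1, h2, ?_, ?_⟩
  · intro hmem; exact absurd hmem.1 (not_le.mpr h1)
  · intro hmem; exact absurd hmem.2 (not_le.mpr h2)
end

section
/- Let ε_∞ and ε_st be real numbers with ε_st > ε_∞ > 0 and ε_st ≥ 1, let ω_T > 0 and c > 0, and define ε(ω) = ε_∞ + ω_T²·(ε_st − ε_∞)/(ω_T² − ω²). Let k₀ > 0 and suppose ω : ℝ → ℝ is differentiable at k₀ and satisfies, for all k in some open neighborhood of k₀, both 0 < ω(k) < ω_T and c²·k² = ω(k)²·ε(ω(k)). Then the group velocity satisfies 0 < ω′(k₀) < c. -/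
/-- Group velocity of the lower polariton branch: if `ω(k)` is differentiable at
`k₀ > 0` and satisfies `0 < ω(k) < ω_T` and the dispersion relation
`c²k² = ω(k)² ε(ω(k))` on an open neighborhood of `k₀`, then `0 < ω'(k₀) < c`. -/
theorem group_velocity_pos_lt_c (εst εinf ωT c : ℝ)
    (hinf : 0 < εinf) (hst : εinf < εst) (hst1 : 1 ≤ εst) (hωT : 0 < ωT) (hc : 0 < c)
    (ε : ℝ → ℝ)
    (hε : ∀ ω : ℝ, ε ω = εinf + ωT ^ 2 * (εst - εinf) / (ωT ^ 2 - ω ^ 2))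
    (ω : ℝ → ℝ) (k₀ : ℝ) (hk₀ : 0 < k₀)
    (hdiff : DifferentiableAt ℝ ω k₀)
    (hnbhd : ∃ s : Set ℝ, IsOpen s ∧ k₀ ∈ s ∧ ∀ k ∈ s,
      0 < ω k ∧ ω k < ωT ∧ c ^ 2 * k ^ 2 = (ω k) ^ 2 * ε (ω k)) :
    0 < deriv ω k₀ ∧ deriv ω k₀ < c := by
  obtain ⟨s, hs, hk₀s, hprop⟩ := hnbhd
  obtain ⟨hω₀pos, hω₀lt, hdisp₀⟩ := hprop k₀ hk₀s
  set ω₀ := ω k₀ with hω₀def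
  have ha : 0 < εst - εinf := sub_pos.2 hst
  have hu : 0 < ωT ^ 2 - ω₀ ^ 2 := by nlinarith
  set u := ωT ^ 2 - ω₀ ^ 2 with hudef
  set D : ℝ := εinf + (εst - εinf) * ωT ^ 4 / u ^ 2 with hDdef
  set E : ℝ := εinf + ωT ^ 2 * (εst - εinf) / u with hEdef
  clear_value u D E
  have hD : 0 < D := by
    rw [hDdef]
    have : 0 < (εst - εinf) * ωT ^ 4 / u ^ 2 :=
      div_pos (mul_pos ha (by positivity)) (by positivity)
    linarith
  have hE : 0 < E := by
    rw [hEdef]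
    have : 0 < ωT ^ 2 * (εst - εinf) / u :=
      div_pos (mul_pos (by positivity) ha) hu
    linarith
  have hE1 : 1 ≤ E := by
    have h1 : εst - εinf ≤ ωT ^ 2 * (εst - εinf) / u := by
      rw [le_div_iff₀ hu]
      nlinarith [sq_nonneg ω₀]
    rw [hEdef]; linarith
  have hDE : E < D := by
    have h1 : D - E = (εst - εinf) * ωT ^ 2 * ω₀ ^ 2 / u ^ 2 := by
      rw [hDdef, hEdef]
      rw [hudef] at hu ⊢
      field_simp
      ring
    have h2 : 0 < (εst - εinf) * ωT ^ 2 * ω₀ ^ 2 / u ^ 2 :=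
      div_pos (by positivity) (by positivity)
    linarith
  -- derivative of g at ω₀
  set g : ℝ → ℝ := fun y => y ^ 2 * (εinf + ωT ^ 2 * (εst - εinf) / (ωT ^ 2 - y ^ 2)) with hgdef
  have hg : HasDerivAt g (2 * ω₀ * D) ω₀ := by
    have h1 : HasDerivAt (fun y : ℝ => y ^ 2) (2 * ω₀) ω₀ := by
      simpa using hasDerivAt_pow 2 ω₀
    have h2 : HasDerivAt (fun y : ℝ => ωT ^ 2 - y ^ 2) (0 - 2 * ω₀) ω₀ :=
      (hasDerivAt_const ω₀ (ωT ^ 2)).sub h1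
    have h3 := (hasDerivAt_const ω₀ (ωT ^ 2 * (εst - εinf))).div h2 (by rw [← hudef]; exact hu.ne')
    have h4 := (hasDerivAt_const ω₀ εinf).add h3
    have h5 := h1.mul h4
    convert h5 using 1
    · rfl
    · rfl
    · rfl
    rw [hDdef]
    rw [hudef] at hu ⊢
    simp only [Pi.add_apply, Pi.div_apply]
    field_simp
    ring
  have hω' : HasDerivAt ω (deriv ω k₀) k₀ := hdiff.hasDerivAt
  have hcomp : HasDerivAt (fun k => g (ω k)) (2 * ω₀ * D * deriv ω k₀) k₀ :=
    hg.comp k₀ hω'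
  have heq : (fun k => c ^ 2 * k ^ 2) =ᶠ[nhds k₀] fun k => g (ω k) := by
    filter_upwards [hs.mem_nhds hk₀s] with k hk
    obtain ⟨h1, h2, h3⟩ := hprop k hk
    rw [h3, hε (ω k)]
  have hcomp' : HasDerivAt (fun k : ℝ => c ^ 2 * k ^ 2) (2 * ω₀ * D * deriv ω k₀) k₀ :=
    hcomp.congr_of_eventuallyEq heq
  have hlhs : HasDerivAt (fun k : ℝ => c ^ 2 * k ^ 2) (c ^ 2 * (2 * k₀)) k₀ :=
    (hasDerivAt_pow 2 k₀).const_mul (c ^ 2) |>.congr_deriv (by ring)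
  have key : 2 * ω₀ * D * deriv ω k₀ = c ^ 2 * (2 * k₀) := hcomp'.unique hlhs
  -- dispersion at k₀
  have disp : c ^ 2 * k₀ ^ 2 = ω₀ ^ 2 * E := by
    rw [hdisp₀, hε ω₀, hEdef, ← hudef]
  set d := deriv ω k₀ with hddef
  clear_value d
  clear_value ω₀
  clear hcomp hcomp' heq hlhs hg hω' hprop hs hdiff hε hdisp₀ hgdef
  have hkey : ω₀ * D * d = c ^ 2 * k₀ := by linarith [key]
  have hωD : 0 < ω₀ * D := mul_pos hω₀pos hD
  have hdpos : 0 < d := by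
    nlinarith [mul_pos (mul_pos hc hc) hk₀]
  constructor
  · exact hdpos
  · have hck : c * k₀ < ω₀ * D := by
      have hsq : (c * k₀) ^ 2 < (ω₀ * D) ^ 2 := by
        have hE2 : E ≤ E ^ 2 := by nlinarith
        have hED2 : E ^ 2 < D ^ 2 := by nlinarith
        have t1 : ω₀ ^ 2 * E ≤ ω₀ ^ 2 * E ^ 2 :=
          mul_le_mul_of_nonneg_left hE2 (sq_nonneg ω₀)
        have t2 : ω₀ ^ 2 * E ^ 2 < ω₀ ^ 2 * D ^ 2 :=
          mul_lt_mul_of_pos_left hED2 (pow_pos hω₀pos 2)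
        have e1 : (c * k₀) ^ 2 = c ^ 2 * k₀ ^ 2 := by ring
        have e2 : (ω₀ * D) ^ 2 = ω₀ ^ 2 * D ^ 2 := by ring
        linarith
      exact lt_of_pow_lt_pow_left₀ 2 hωD.le hsq
    have hd : d = c ^ 2 * k₀ / (ω₀ * D) := by
      field_simp
      linarith [hkey]
    rw [hd, div_lt_iff₀ hωD]
    have h := mul_lt_mul_of_pos_left hck hc
    have e : c ^ 2 * k₀ = c * (c * k₀) := by ring
    linarith
end

section
/- Let η be the 4×4 real diagonal matrix diag(1, −1, −1, −1) and let n₀ : Fin 4 → ℝ be the null vector (1,0,0,1). The set S := {A : Matrix (Fin 4) (Fin 4) ℝ | Aᵀ · η · A = η ∧ det A = 1 ∧ 0 < A 0 0 ∧ A.mulVec n₀ = n₀} is a group under matrix multiplication, and it is isomorphic as a group to the semidirect product ℂ ⋊ Circle, where Circle (the unit circle group in ℂ) acts on the additive group ℂ by multiplication u • w = u·w. -/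
open Matrix

/-- Rotation of the additive group `ℂ` by a unit complex number `u : Circle`,
`w ↦ u * w`. -/
noncomputable def Circle.rotAddAut : Circle →* Multiplicative (AddAut ℂ) :=
  DistribMulAction.toAddAut Circle ℂ

/-- The action of the circle group on the additive group `ℂ` (written
multiplicatively as `Multiplicative ℂ`) by complex multiplication `u • w = u * w`. -/
noncomputable def Circle.rotMulAut : Circle →* MulAut (Multiplicative ℂ) where
  toFun u := AddEquiv.toMultiplicative (Multiplicative.toAdd (Circle.rotAddAut u))
  map_one' := by
    ext w
    simp [Circle.rotAddAut, DistribMulAction.toAddAut]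
  map_mul' u v := by
    ext w
    simp [Circle.rotAddAut, DistribMulAction.toAddAut, mul_smul]

noncomputable section
namespace LG

def eta : Matrix (Fin 4) (Fin 4) ℝ := Matrix.diagonal ![(1 : ℝ), -1, -1, -1]
def nvec : Fin 4 → ℝ := ![(1:ℝ), 0, 0, 1]

/-- parametrized little group matrix -/
def M (w : ℂ) (u : Circle) : Matrix (Fin 4) (Fin 4) ℝ :=
  let a := w.re; let b := w.im; let c := (u:ℂ).re; let d := (u:ℂ).im
  !![1+(a^2+b^2)/2, a*c+b*d, b*c-a*d, -((a^2+b^2)/2);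
     a,   c,       -d,      -a;
     b,   d,       c,       -b;
     (a^2+b^2)/2, a*c+b*d, b*c-a*d, 1-(a^2+b^2)/2]

lemma circ_sq (u : Circle) : (u:ℂ).re^2 + (u:ℂ).im^2 = 1 := by
  have h2 : Complex.normSq u = 1 := Circle.normSq_coe u
  rw [Complex.normSq_apply] at h2; nlinarith

set_option maxHeartbeats 1000000 in
lemma M_mul (w₁ w₂ : ℂ) (u₁ u₂ : Circle) :
    M w₁ u₁ * M w₂ u₂ = M (w₁ + (u₁:ℂ) * w₂) (u₁ * u₂) := by
  have h := circ_sq u₁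
  have hd : ((u₁:ℂ).im)^2 = 1 - ((u₁:ℂ).re)^2 := by linarith
  ext i j
  fin_cases i <;> fin_cases j <;>
    simp [M, Matrix.mul_apply, Fin.sum_univ_four, Complex.add_re, Complex.add_im,
      Complex.mul_re, Complex.mul_im] <;>
    ring_nf <;> simp only [hd] <;> ring

lemma M_one : M 0 1 = 1 := by
  ext i j
  fin_cases i <;> fin_cases j <;>
    simp [M, Matrix.one_apply, Matrix.vecHead, Matrix.vecTail]

lemma det_fin_four' (A : Matrix (Fin 4) (Fin 4) ℝ) :
    A.det = A 0 0 * (A 1 1 * A 2 2 * A 3 3 - A 1 1 * A 2 3 * A 3 2 - A 1 2 * A 2 1 * A 3 3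
        + A 1 2 * A 2 3 * A 3 1 + A 1 3 * A 2 1 * A 3 2 - A 1 3 * A 2 2 * A 3 1)
      - A 0 1 * (A 1 0 * A 2 2 * A 3 3 - A 1 0 * A 2 3 * A 3 2 - A 1 2 * A 2 0 * A 3 3
        + A 1 2 * A 2 3 * A 3 0 + A 1 3 * A 2 0 * A 3 2 - A 1 3 * A 2 2 * A 3 0)
      + A 0 2 * (A 1 0 * A 2 1 * A 3 3 - A 1 0 * A 2 3 * A 3 1 - A 1 1 * A 2 0 * A 3 3
        + A 1 1 * A 2 3 * A 3 0 + A 1 3 * A 2 0 * A 3 1 - A 1 3 * A 2 1 * A 3 0)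
      - A 0 3 * (A 1 0 * A 2 1 * A 3 2 - A 1 0 * A 2 2 * A 3 1 - A 1 1 * A 2 0 * A 3 2
        + A 1 1 * A 2 2 * A 3 0 + A 1 2 * A 2 0 * A 3 1 - A 1 2 * A 2 1 * A 3 0) := by
  have e1 : (Fin.succ 2 : Fin 4) = 3 := rfl
  have e2 : ((2 : Fin 3).castSucc : Fin 4) = 2 := rfl
  have e3 : Fin.succAbove (2 : Fin 4) (2 : Fin 3) = 3 := by decide
  have e4 : Fin.succAbove (3 : Fin 4) (2 : Fin 3) = 2 := by decide
  have e5 : Fin.succAbove (1 : Fin 4) (2 : Fin 3) = 3 := by decide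
  rw [Matrix.det_succ_row_zero]
  simp [Fin.sum_univ_succ, Matrix.det_fin_three, Fin.succAbove_zero, Fin.succ_succAbove_zero, Fin.succ_succAbove_succ, Fin.succ_succAbove_one]
  simp only [e1, e2, e3, e4, e5]
  ring

set_option maxHeartbeats 1000000 in
lemma M_det (w : ℂ) (u : Circle) : (M w u).det = 1 := by
  have h := circ_sq u
  have hd : ((u:ℂ).im)^2 = 1 - ((u:ℂ).re)^2 := by linarith
  rw [det_fin_four']
  simp [M]
  ring_nf
  simp only [hd]
  ring

set_option maxHeartbeats 1000000 in
lemma M_lorentz (w : ℂ) (u : Circle) : (M w u)ᵀ * eta * M w u = eta := by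
  have h := circ_sq u
  have hd : ((u:ℂ).im)^2 = 1 - ((u:ℂ).re)^2 := by linarith
  ext i j
  fin_cases i <;> fin_cases j <;>
    simp [M, eta, Matrix.mul_apply, Fin.sum_univ_four, Matrix.diagonal_apply,
      Matrix.transpose_apply, Matrix.vecHead, Matrix.vecTail] <;>
    ring_nf <;> simp only [hd] <;> ring

lemma M_pos (w : ℂ) (u : Circle) : 0 < M w u 0 0 := by
  simp only [M]
  norm_num
  positivity

lemma M_fix (w : ℂ) (u : Circle) : (M w u).mulVec nvec = nvec := by
  funext i
  fin_cases i <;>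
    simp [M, nvec, Matrix.mulVec, dotProduct, Fin.sum_univ_four]

lemma sq_sum_zero {x y : ℝ} (h : x^2 + y^2 = 0) : x = 0 ∧ y = 0 := by
  constructor <;> nlinarith [sq_nonneg x, sq_nonneg y]

lemma eta_sq : eta * eta = 1 := by
  ext i j
  fin_cases i <;> fin_cases j <;>
    simp [eta, Matrix.mul_apply, Fin.sum_univ_four, Matrix.diagonal_apply, Matrix.one_apply]

variable {A : Matrix (Fin 4) (Fin 4) ℝ}

lemma rows_lorentz (h1 : Aᵀ * eta * A = eta) : A * eta * Aᵀ = eta := by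
  have hBA : (eta * Aᵀ * eta) * A = 1 := by
    calc (eta * Aᵀ * eta) * A = eta * (Aᵀ * eta * A) := by
          simp only [Matrix.mul_assoc]
      _ = 1 := by rw [h1, eta_sq]
  have hAB : A * (eta * Aᵀ * eta) = 1 := mul_eq_one_comm.mpr hBA
  have := congrArg (fun X => X * eta) hAB
  simp only [Matrix.mul_assoc, eta_sq, Matrix.mul_one, Matrix.one_mul] at this
  simpa [Matrix.mul_assoc] using this

lemma inv_fix (h1 : Aᵀ * eta * A = eta) (h4 : A.mulVec nvec = nvec) :
    (eta * Aᵀ * eta).mulVec nvec = nvec := by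
  have hBA : (eta * Aᵀ * eta) * A = 1 := by
    calc (eta * Aᵀ * eta) * A = eta * (Aᵀ * eta * A) := by
          simp only [Matrix.mul_assoc]
      _ = 1 := by rw [h1, eta_sq]
  calc (eta * Aᵀ * eta).mulVec nvec = (eta * Aᵀ * eta).mulVec (A.mulVec nvec) := by rw [h4]
    _ = ((eta * Aᵀ * eta) * A).mulVec nvec := Matrix.mulVec_mulVec _ _ _
    _ = nvec := by rw [hBA, Matrix.one_mulVec]

set_option maxHeartbeats 2000000 in
lemma exists_param (h1 : Aᵀ * eta * A = eta) (h2 : A.det = 1)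
    (h4 : A.mulVec nvec = nvec) : ∃ (w : ℂ) (u : Circle), M w u = A := by
  have hrow := rows_lorentz h1
  have h5 := inv_fix h1 h4
  have e00 : A 0 0^2 - A 0 1^2 - A 0 2^2 - A 0 3^2 = 1 := by
    have h := congrFun (congrFun hrow 0) 0
    simp [eta, Matrix.mul_apply, Fin.sum_univ_four, Matrix.transpose_apply,
      Matrix.diagonal_apply] at h
    linear_combination h
  have e11 : A 1 0^2 - A 1 1^2 - A 1 2^2 - A 1 3^2 = -1 := by
    have h := congrFun (congrFun hrow 1) 1
    simp [eta, Matrix.mul_apply, Fin.sum_univ_four, Matrix.transpose_apply,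
      Matrix.diagonal_apply] at h
    linear_combination h
  have e22 : A 2 0^2 - A 2 1^2 - A 2 2^2 - A 2 3^2 = -1 := by
    have h := congrFun (congrFun hrow 2) 2
    simp [eta, Matrix.mul_apply, Fin.sum_univ_four, Matrix.transpose_apply,
      Matrix.diagonal_apply] at h
    linear_combination h
  have e01 : A 0 0*A 1 0 - A 0 1*A 1 1 - A 0 2*A 1 2 - A 0 3*A 1 3 = 0 := by
    have h := congrFun (congrFun hrow 0) 1
    simp [eta, Matrix.mul_apply, Fin.sum_univ_four, Matrix.transpose_apply,
      Matrix.diagonal_apply] at h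
    linear_combination h
  have e02 : A 0 0*A 2 0 - A 0 1*A 2 1 - A 0 2*A 2 2 - A 0 3*A 2 3 = 0 := by
    have h := congrFun (congrFun hrow 0) 2
    simp [eta, Matrix.mul_apply, Fin.sum_univ_four, Matrix.transpose_apply,
      Matrix.diagonal_apply] at h
    linear_combination h
  have c0 : A 0 0 + A 0 3 = 1 := by
    have h := congrFun h4 0
    simp [Matrix.mulVec, dotProduct, nvec, Fin.sum_univ_four] at h
    linarith
  have c1 : A 1 0 + A 1 3 = 0 := by
    have h := congrFun h4 1
    simp [Matrix.mulVec, dotProduct, nvec, Fin.sum_univ_four] at h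
    linarith
  have c2 : A 2 0 + A 2 3 = 0 := by
    have h := congrFun h4 2
    simp [Matrix.mulVec, dotProduct, nvec, Fin.sum_univ_four] at h
    linarith
  have c3 : A 3 0 + A 3 3 = 1 := by
    have h := congrFun h4 3
    simp [Matrix.mulVec, dotProduct, nvec, Fin.sum_univ_four] at h
    linarith
  have r0 : A 0 0 - A 3 0 = 1 := by
    have h := congrFun h5 0
    simp [eta, Matrix.mulVec, dotProduct, nvec, Fin.sum_univ_four,
      Matrix.mul_apply, Matrix.transpose_apply, Matrix.diagonal_apply] at h
    linarith
  have r1 : A 0 1 - A 3 1 = 0 := by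
    have h := congrFun h5 1
    simp [eta, Matrix.mulVec, dotProduct, nvec, Fin.sum_univ_four,
      Matrix.mul_apply, Matrix.transpose_apply, Matrix.diagonal_apply] at h
    linarith
  have r2 : A 0 2 - A 3 2 = 0 := by
    have h := congrFun h5 2
    simp [eta, Matrix.mulVec, dotProduct, nvec, Fin.sum_univ_four,
      Matrix.mul_apply, Matrix.transpose_apply, Matrix.diagonal_apply] at h
    linarith
  have r3 : A 0 3 - A 3 3 = -1 := by
    have h := congrFun h5 3
    simp [eta, Matrix.mulVec, dotProduct, nvec, Fin.sum_univ_four,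
      Matrix.mul_apply, Matrix.transpose_apply, Matrix.diagonal_apply] at h
    linarith
  have s03 : A 0 3 = 1 - A 0 0 := by linarith
  have s13 : A 1 3 = -A 1 0 := by linarith
  have s23 : A 2 3 = -A 2 0 := by linarith
  have s30 : A 3 0 = A 0 0 - 1 := by linarith
  have s31 : A 3 1 = A 0 1 := by linarith
  have s32 : A 3 2 = A 0 2 := by linarith
  have s33 : A 3 3 = 2 - A 0 0 := by linarith
  rw [det_fin_four', s03, s13, s23, s30, s31, s32, s33] at h2
  have hrot : A 1 1 * A 2 2 - A 2 1 * A 1 2 = 1 := by linear_combination h2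
  rw [s13] at e11
  have f11 : A 1 1^2 + A 1 2^2 = 1 := by linear_combination -e11
  rw [s23] at e22
  have f22 : A 2 1^2 + A 2 2^2 = 1 := by linear_combination -e22
  have key : (A 2 2 - A 1 1)^2 + (A 1 2 + A 2 1)^2 = 0 := by
    linear_combination f11 + f22 - 2*hrot
  obtain ⟨k1, k2⟩ := sq_sum_zero key
  have hc : A 2 2 = A 1 1 := by linarith
  have hd : A 1 2 = -A 2 1 := by linarith
  have hcd : A 1 1^2 + A 2 1^2 = 1 := by rw [hd] at f11; linear_combination f11
  rw [s03, s13, hd] at e01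
  rw [s03, s23, hc] at e02
  have hA01 : A 0 1 = A 1 0 * A 1 1 + A 2 0 * A 2 1 := by
    linear_combination (-(A 1 1))*e01 + (-(A 2 1))*e02 - A 0 1*hcd
  have hA02 : A 0 2 = A 2 0 * A 1 1 - A 1 0 * A 2 1 := by
    linear_combination (A 2 1)*e01 + (-(A 1 1))*e02 - A 0 2*hcd
  rw [s03, hA01, hA02] at e00
  have hA00 : A 0 0 = 1 + (A 1 0^2 + A 2 0^2)/2 := by
    linear_combination (1/2)*e00 + ((A 1 0^2 + A 2 0^2)/2)*hcd
  refine ⟨⟨A 1 0, A 2 0⟩, ⟨⟨A 1 1, A 2 1⟩, ?_⟩, ?_⟩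
  · show _ ∈ Metric.sphere (0:ℂ) 1
    rw [mem_sphere_zero_iff_norm, Complex.norm_def,
      Complex.normSq_mk, show A 1 1 * A 1 1 + A 2 1 * A 2 1 = 1 by linear_combination hcd]
    exact Real.sqrt_one
  · ext i j
    fin_cases i <;> fin_cases j <;>
      simp [M, Matrix.vecHead, Matrix.vecTail] <;>
      first
        | rfl
        | linear_combination -hA00
        | linear_combination -hA01
        | linear_combination -hA02
        | linear_combination -s03 + hA00
        | linear_combination -s13
        | linear_combination -s23
        | linear_combination -hd
        | linear_combination -hc
        | linear_combination -s30 - hA00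
        | linear_combination -s31 - hA01
        | linear_combination -s32 - hA02
        | linear_combination -s33 + hA00


lemma coe_mul_inv (u : Circle) : (u:ℂ) * ((u⁻¹:Circle):ℂ) = 1 := by
  rw [← Circle.coe_mul, mul_inv_cancel, Circle.coe_one]

lemma M_val_inv (w : ℂ) (u : Circle) :
    M w u * M (-(((u⁻¹:Circle):ℂ) * w)) u⁻¹ = 1 := by
  rw [M_mul]
  have h := coe_mul_inv u
  have hz : w + (u:ℂ) * (-(((u⁻¹:Circle):ℂ) * w)) = 0 := by
    calc w + (u:ℂ) * (-(((u⁻¹:Circle):ℂ) * w))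
        = w - ((u:ℂ) * ((u⁻¹:Circle):ℂ)) * w := by ring
      _ = 0 := by rw [h]; ring
  rw [hz, mul_inv_cancel]
  exact M_one

lemma M_inv_val (w : ℂ) (u : Circle) :
    M (-(((u⁻¹:Circle):ℂ) * w)) u⁻¹ * M w u = 1 := by
  rw [M_mul]
  have hz : -(((u⁻¹:Circle):ℂ) * w) + ((u⁻¹:Circle):ℂ) * w = 0 := by ring
  rw [hz, inv_mul_cancel]
  exact M_one

/-- `M` as an element of the general linear group. -/
def Mgl (w : ℂ) (u : Circle) : Matrix.GeneralLinearGroup (Fin 4) ℝ :=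
  ⟨M w u, M (-(((u⁻¹:Circle):ℂ) * w)) u⁻¹, M_val_inv w u, M_inv_val w u⟩

@[simp] lemma Mgl_coe (w : ℂ) (u : Circle) :
    ((Mgl w u : Matrix.GeneralLinearGroup (Fin 4) ℝ) : Matrix (Fin 4) (Fin 4) ℝ) = M w u := rfl

/-- The parametrization as a monoid hom from the semidirect product. -/
noncomputable def phi : (Multiplicative ℂ ⋊[Circle.rotMulAut] Circle) →*
    Matrix.GeneralLinearGroup (Fin 4) ℝ where
  toFun p := Mgl p.left.toAdd p.right
  map_one' := by
    apply Units.ext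
    show M ((1 : Multiplicative ℂ).toAdd) 1 = 1
    simpa using M_one
  map_mul' p q := by
    apply Units.ext
    show M ((p * q).left.toAdd) ((p * q).right) = M p.left.toAdd p.right * M q.left.toAdd q.right
    have hl : (p * q).left.toAdd = p.left.toAdd + (p.right : ℂ) * q.left.toAdd := by
      rw [SemidirectProduct.mul_left]
      simp [Circle.rotMulAut, Circle.rotAddAut, Circle.smul_def, DistribMulAction.toAddAut]
      rfl
    rw [M_mul, hl]
    rfl

lemma M_inj {w w' : ℂ} {u u' : Circle} (h : M w u = M w' u') : w = w' ∧ u = u' := by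
  have h10 := congrFun (congrFun h 1) 0
  have h20 := congrFun (congrFun h 2) 0
  have h11 := congrFun (congrFun h 1) 1
  have h21 := congrFun (congrFun h 2) 1
  simp [M] at h10 h20 h11 h21
  exact ⟨Complex.ext h10 h20, Circle.ext (Complex.ext h11 h21)⟩

lemma phi_inj : Function.Injective phi := by
  intro p q h
  have hM : M p.left.toAdd p.right = M q.left.toAdd q.right :=
    congrArg (fun (X : Matrix.GeneralLinearGroup (Fin 4) ℝ) =>
      (X : Matrix (Fin 4) (Fin 4) ℝ)) h
  obtain ⟨hw, hu⟩ := M_inj hM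
  ext
  · exact congrArg Multiplicative.ofAdd hw
  · exact congrArg _ hu

end LG
end

/-- Wigner's little group of the lightlike standard vector `n₀ = (1,0,0,1)`:
the set of proper orthochronous Lorentz matrices (`AᵀηA = η`, `det A = 1`,
`A₀₀ > 0`, with `η = diag(1,-1,-1,-1)`) fixing `n₀` is a group under matrix
multiplication (exhibited as a subgroup of the general linear group), and it is
isomorphic to the semidirect product `ℂ ⋊ Circle`, the circle group acting on
the additive group `ℂ` by multiplication. -/
theorem little_group_lightlike_iso_euclidean_two :
    (∀ (u : Circle) (w : ℂ),
      Circle.rotMulAut u (Multiplicative.ofAdd w) =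
        Multiplicative.ofAdd ((u : ℂ) * w)) ∧
    ∃ G : Subgroup (Matrix.GeneralLinearGroup (Fin 4) ℝ),
      (∀ A : Matrix.GeneralLinearGroup (Fin 4) ℝ,
        A ∈ G ↔
          ((A : Matrix (Fin 4) (Fin 4) ℝ)ᵀ *
              Matrix.diagonal ![(1 : ℝ), -1, -1, -1] *
              (A : Matrix (Fin 4) (Fin 4) ℝ) =
            Matrix.diagonal ![(1 : ℝ), -1, -1, -1] ∧
          (A : Matrix (Fin 4) (Fin 4) ℝ).det = 1 ∧
          0 < (A : Matrix (Fin 4) (Fin 4) ℝ) 0 0 ∧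
          (A : Matrix (Fin 4) (Fin 4) ℝ).mulVec ![(1 : ℝ), 0, 0, 1] =
            ![(1 : ℝ), 0, 0, 1])) ∧
      (∀ A : Matrix (Fin 4) (Fin 4) ℝ,
        (Aᵀ * Matrix.diagonal ![(1 : ℝ), -1, -1, -1] * A =
            Matrix.diagonal ![(1 : ℝ), -1, -1, -1] ∧
          A.det = 1 ∧ 0 < A 0 0 ∧
          A.mulVec ![(1 : ℝ), 0, 0, 1] = ![(1 : ℝ), 0, 0, 1]) →
        ∃ A' : Matrix.GeneralLinearGroup (Fin 4) ℝ,
          (A' : Matrix (Fin 4) (Fin 4) ℝ) = A) ∧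
      Nonempty (G ≃* (Multiplicative ℂ ⋊[Circle.rotMulAut] Circle)) := by
  constructor
  · intro u w
    simp [Circle.rotMulAut, Circle.rotAddAut, Circle.smul_def, DistribMulAction.toAddAut, DistribMulAction.toAddEquiv_apply]
    rfl
  · refine ⟨LG.phi.range, ?_, ?_, ?_⟩
    · intro A
      constructor
      · rintro ⟨p, rfl⟩
        have h : ((LG.phi p : Matrix.GeneralLinearGroup (Fin 4) ℝ) :
            Matrix (Fin 4) (Fin 4) ℝ) = LG.M p.left.toAdd p.right := rfl
        rw [h]
        exact ⟨LG.M_lorentz _ _, LG.M_det _ _, LG.M_pos _ _, LG.M_fix _ _⟩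
      · rintro ⟨hL, hdet, hpos, hfix⟩
        obtain ⟨w, u, hM⟩ := LG.exists_param hL hdet hfix
        exact ⟨⟨Multiplicative.ofAdd w, u⟩, Units.ext hM⟩
    · rintro A ⟨hL, hdet, hpos, hfix⟩
      obtain ⟨w, u, hM⟩ := LG.exists_param hL hdet hfix
      exact ⟨LG.Mgl w u, hM⟩
    · exact ⟨(MonoidHom.ofInjective LG.phi_inj).symm⟩
end

section
/- Let η be the 4×4 real diagonal matrix diag(1, −1, −1, −1) and let m > 0. For any two vectors p, q : Fin 4 → ℝ with (p 0)² − (p 1)² − (p 2)² − (p 3)² = m², p 0 > 0, (q 0)² − (q 1)² − (q 2)² − (q 3)² = m² and q 0 > 0, there exists a real 4×4 matrix A with Aᵀ · η · A = η, det A = 1, A 0 0 > 0 and A.mulVec p = q. -/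
open Matrix

/-- Unnormalized boost matrix: `m*(E+m)` times the standard boost. -/
def lboostM (E a b c m : ℝ) : Matrix (Fin 4) (Fin 4) ℝ :=
  !![E*(E+m), a*(E+m), b*(E+m), c*(E+m);
     a*(E+m), m*(E+m) + a*a, a*b, a*c;
     b*(E+m), a*b, m*(E+m) + b*b, b*c;
     c*(E+m), a*c, b*c, m*(E+m) + c*c]

noncomputable def lboost (E a b c m : ℝ) : Matrix (Fin 4) (Fin 4) ℝ :=
  (m*(E+m))⁻¹ • lboostM E a b c m

lemma eta_eq : (Matrix.diagonal ![(1 : ℝ), -1, -1, -1]) =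
    !![1,0,0,0; 0,-1,0,0; 0,0,-1,0; 0,0,0,-1] := by
  ext i j
  fin_cases i <;> fin_cases j <;>
    simp [Matrix.diagonal, Matrix.vecHead, Matrix.vecTail]

lemma lboostM_eta (E a b c m : ℝ) (h : E^2 = m^2 + a^2 + b^2 + c^2) :
    (lboostM E a b c m)ᵀ * !![(1:ℝ),0,0,0; 0,-1,0,0; 0,0,-1,0; 0,0,0,-1] *
      lboostM E a b c m =
    (m*(E+m))^2 • !![(1:ℝ),0,0,0; 0,-1,0,0; 0,0,-1,0; 0,0,0,-1] := by
  ext i j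
  fin_cases i <;> fin_cases j
  · simp [lboostM, Matrix.mul_apply, Matrix.transpose_apply, Fin.sum_univ_four,
        Matrix.vecHead, Matrix.vecTail]
    linear_combination ((E+m)^2) * h
  · simp [lboostM, Matrix.mul_apply, Matrix.transpose_apply, Fin.sum_univ_four,
        Matrix.vecHead, Matrix.vecTail]
    linear_combination (a*(E+m)) * h
  · simp [lboostM, Matrix.mul_apply, Matrix.transpose_apply, Fin.sum_univ_four,
        Matrix.vecHead, Matrix.vecTail]
    linear_combination (b*(E+m)) * h
  · simp [lboostM, Matrix.mul_apply, Matrix.transpose_apply, Fin.sum_univ_four,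
        Matrix.vecHead, Matrix.vecTail]
    linear_combination (c*(E+m)) * h
  · simp [lboostM, Matrix.mul_apply, Matrix.transpose_apply, Fin.sum_univ_four,
        Matrix.vecHead, Matrix.vecTail]
    linear_combination (a*(E+m)) * h
  · simp [lboostM, Matrix.mul_apply, Matrix.transpose_apply, Fin.sum_univ_four,
        Matrix.vecHead, Matrix.vecTail]
    linear_combination (a^2) * h
  · simp [lboostM, Matrix.mul_apply, Matrix.transpose_apply, Fin.sum_univ_four,
        Matrix.vecHead, Matrix.vecTail]
    linear_combination (a*b) * h
  · simp [lboostM, Matrix.mul_apply, Matrix.transpose_apply, Fin.sum_univ_four,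
        Matrix.vecHead, Matrix.vecTail]
    linear_combination (a*c) * h
  · simp [lboostM, Matrix.mul_apply, Matrix.transpose_apply, Fin.sum_univ_four,
        Matrix.vecHead, Matrix.vecTail]
    linear_combination (b*(E+m)) * h
  · simp [lboostM, Matrix.mul_apply, Matrix.transpose_apply, Fin.sum_univ_four,
        Matrix.vecHead, Matrix.vecTail]
    linear_combination (a*b) * h
  · simp [lboostM, Matrix.mul_apply, Matrix.transpose_apply, Fin.sum_univ_four,
        Matrix.vecHead, Matrix.vecTail]
    linear_combination (b^2) * h
  · simp [lboostM, Matrix.mul_apply, Matrix.transpose_apply, Fin.sum_univ_four,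
        Matrix.vecHead, Matrix.vecTail]
    linear_combination (b*c) * h
  · simp [lboostM, Matrix.mul_apply, Matrix.transpose_apply, Fin.sum_univ_four,
        Matrix.vecHead, Matrix.vecTail]
    linear_combination (c*(E+m)) * h
  · simp [lboostM, Matrix.mul_apply, Matrix.transpose_apply, Fin.sum_univ_four,
        Matrix.vecHead, Matrix.vecTail]
    linear_combination (a*c) * h
  · simp [lboostM, Matrix.mul_apply, Matrix.transpose_apply, Fin.sum_univ_four,
        Matrix.vecHead, Matrix.vecTail]
    linear_combination (b*c) * h
  · simp [lboostM, Matrix.mul_apply, Matrix.transpose_apply, Fin.sum_univ_four,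
        Matrix.vecHead, Matrix.vecTail]
    linear_combination (c^2) * h

lemma lboostM_det (E a b c m : ℝ) (h : E^2 = m^2 + a^2 + b^2 + c^2) :
    (lboostM E a b c m).det = (m*(E+m))^4 := by
  simp [lboostM, Matrix.det_succ_row_zero, Fin.sum_univ_succ, Matrix.det_fin_three,
    Matrix.submatrix_apply, Matrix.vecHead, Matrix.vecTail, Fin.succAbove,
    Fin.castSucc, Fin.castAdd, Fin.castLE]
  linear_combination (m^3*(E+m)^3) * h

lemma lboost_lorentz (E a b c m : ℝ) (hm : 0 < m) (hE : 0 < E)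
    (h : E^2 = m^2 + a^2 + b^2 + c^2) :
    (lboost E a b c m)ᵀ * Matrix.diagonal ![(1 : ℝ), -1, -1, -1] * lboost E a b c m =
      Matrix.diagonal ![(1 : ℝ), -1, -1, -1] := by
  have hc : (m*(E+m)) ≠ 0 := by positivity
  rw [eta_eq, lboost, transpose_smul, Matrix.smul_mul, Matrix.smul_mul,
    Matrix.mul_smul, smul_smul, lboostM_eta E a b c m h, smul_smul]
  rw [show (m*(E+m))⁻¹ * (m*(E+m))⁻¹ * (m*(E+m))^2 = 1 by field_simp, one_smul]

lemma lboost_det (E a b c m : ℝ) (hm : 0 < m) (hE : 0 < E)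
    (h : E^2 = m^2 + a^2 + b^2 + c^2) : (lboost E a b c m).det = 1 := by
  have hc : (m*(E+m)) ≠ 0 := by positivity
  rw [lboost, Matrix.det_smul, lboostM_det E a b c m h]
  rw [Fintype.card_fin]
  field_simp

lemma lboost_mulVec (E a b c m : ℝ) (hm : 0 < m) (hE : 0 < E) :
    (lboost E a b c m).mulVec ![m,0,0,0] = ![E,a,b,c] := by
  have hc : (m*(E+m)) ≠ 0 := by positivity
  rw [lboost]
  ext i
  fin_cases i <;>
    · simp [lboostM, Matrix.mulVec, dotProduct, Fin.sum_univ_four,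
        Matrix.vecHead, Matrix.vecTail, Matrix.smul_apply]
      field_simp

lemma lboostM_mulVec_inv (E a b c m : ℝ) (h : E^2 = m^2 + a^2 + b^2 + c^2) :
    (lboostM E (-a) (-b) (-c) m).mulVec ![E,a,b,c] = (m*(E+m)) • ![m,0,0,0] := by
  ext i
  fin_cases i
  · simp [lboostM, Matrix.mulVec, dotProduct, Fin.sum_univ_four,
      Matrix.vecHead, Matrix.vecTail]
    linear_combination (E+m) * h
  · simp [lboostM, Matrix.mulVec, dotProduct, Fin.sum_univ_four,
      Matrix.vecHead, Matrix.vecTail]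
    linear_combination (-a) * h
  · simp [lboostM, Matrix.mulVec, dotProduct, Fin.sum_univ_four,
      Matrix.vecHead, Matrix.vecTail]
    linear_combination (-b) * h
  · simp [lboostM, Matrix.mulVec, dotProduct, Fin.sum_univ_four,
      Matrix.vecHead, Matrix.vecTail]
    linear_combination (-c) * h

lemma lboost_mulVec_inv (E a b c m : ℝ) (hm : 0 < m) (hE : 0 < E)
    (h : E^2 = m^2 + a^2 + b^2 + c^2) :
    (lboost E (-a) (-b) (-c) m).mulVec ![E,a,b,c] = ![m,0,0,0] := by
  have hc : (m*(E+m)) ≠ 0 := by positivity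
  rw [lboost, Matrix.smul_mulVec, lboostM_mulVec_inv E a b c m h, smul_smul,
    inv_mul_cancel₀ hc, one_smul]

lemma vec_eq_four (p : Fin 4 → ℝ) : p = ![p 0, p 1, p 2, p 3] := by
  ext i; fin_cases i <;> rfl

/-- The proper orthochronous Lorentz group acts transitively on the positive
mass-`m` shell: for any `p, q` with `p₀² - p₁² - p₂² - p₃² = m²`, `p₀ > 0`,
`q₀² - q₁² - q₂² - q₃² = m²`, `q₀ > 0`, there is a matrix `A` with `AᵀηA = η`,
`det A = 1`, `A₀₀ > 0` and `A p = q`, where `η = diag(1,-1,-1,-1)`. -/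
theorem lorentz_transitive_on_mass_shell (m : ℝ) (hm : 0 < m)
    (p q : Fin 4 → ℝ)
    (hpm : (p 0) ^ 2 - (p 1) ^ 2 - (p 2) ^ 2 - (p 3) ^ 2 = m ^ 2) (hp0 : 0 < p 0)
    (hqm : (q 0) ^ 2 - (q 1) ^ 2 - (q 2) ^ 2 - (q 3) ^ 2 = m ^ 2) (hq0 : 0 < q 0) :
    ∃ A : Matrix (Fin 4) (Fin 4) ℝ,
      Aᵀ * Matrix.diagonal ![(1 : ℝ), -1, -1, -1] * A =
          Matrix.diagonal ![(1 : ℝ), -1, -1, -1] ∧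
      A.det = 1 ∧ 0 < A 0 0 ∧ A.mulVec p = q := by
  have hEp : (p 0)^2 = m^2 + (-(p 1))^2 + (-(p 2))^2 + (-(p 3))^2 := by ring_nf; linarith
  have hEq : (q 0)^2 = m^2 + (q 1)^2 + (q 2)^2 + (q 3)^2 := by linarith
  set B := lboost (q 0) (q 1) (q 2) (q 3) m with hB
  set C := lboost (p 0) (-(p 1)) (-(p 2)) (-(p 3)) m with hC
  have hBl := lboost_lorentz (q 0) (q 1) (q 2) (q 3) m hm hq0 hEq
  have hCl := lboost_lorentz (p 0) (-(p 1)) (-(p 2)) (-(p 3)) m hm hp0 hEp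
  refine ⟨B * C, ?_, ?_, ?_, ?_⟩
  · rw [transpose_mul]
    calc Cᵀ * Bᵀ * Matrix.diagonal ![(1 : ℝ), -1, -1, -1] * (B * C)
        = Cᵀ * (Bᵀ * Matrix.diagonal ![(1 : ℝ), -1, -1, -1] * B) * C := by
          simp only [Matrix.mul_assoc]
      _ = Cᵀ * Matrix.diagonal ![(1 : ℝ), -1, -1, -1] * C := by
          rw [hBl, Matrix.mul_assoc]
      _ = _ := hCl
  · rw [Matrix.det_mul, lboost_det (q 0) (q 1) (q 2) (q 3) m hm hq0 hEq,
      lboost_det (p 0) (-(p 1)) (-(p 2)) (-(p 3)) m hm hp0 hEp, mul_one]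
  · have hc1 : (m*(p 0+m)) ≠ 0 := by positivity
    have hc2 : (m*(q 0+m)) ≠ 0 := by positivity
    have hdot : p 1 * q 1 + p 2 * q 2 + p 3 * q 3 < p 0 * q 0 := by
      nlinarith [mul_pos hp0 hq0, sq_nonneg (p 1*q 2 - p 2*q 1),
        sq_nonneg (p 1*q 3 - p 3*q 1), sq_nonneg (p 2*q 3 - p 3*q 2),
        sq_nonneg (p 1*q 1 + p 2*q 2 + p 3*q 3), pow_pos hm 2, pow_pos hm 4,
        sq_nonneg (p 1), sq_nonneg (p 2), sq_nonneg (p 3),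
        sq_nonneg (q 1), sq_nonneg (q 2), sq_nonneg (q 3),
        mul_pos (mul_pos hp0 hq0) (mul_pos hp0 hq0)]
    have hval : (B * C) 0 0 =
        (p 0 * q 0 - (p 1 * q 1 + p 2 * q 2 + p 3 * q 3)) / m^2 := by
      rw [hB, hC]
      simp [lboost, lboostM, Matrix.mul_apply, Fin.sum_univ_four, Matrix.smul_apply,
        Matrix.vecHead, Matrix.vecTail]
      field_simp
      ring
    rw [hval]
    have : 0 < m^2 := by positivity
    exact div_pos (by linarith) this
  · rw [← Matrix.mulVec_mulVec, vec_eq_four p,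
      lboost_mulVec_inv (p 0) (p 1) (p 2) (p 3) m hm hp0 (by linarith),
      lboost_mulVec (q 0) (q 1) (q 2) (q 3) m hm hq0, ← vec_eq_four q]
end

section
/- Let η be the 4×4 real diagonal matrix diag(1, −1, −1, −1). For any two vectors p, q : Fin 4 → ℝ with (p 0)² − (p 1)² − (p 2)² − (p 3)² = 0, p 0 > 0, (q 0)² − (q 1)² − (q 2)² − (q 3)² = 0 and q 0 > 0, there exists a real 4×4 matrix A with Aᵀ · η · A = η, det A = 1, A 0 0 > 0 and A.mulVec p = q. -/
open Matrix

set_option maxHeartbeats 1000000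

private lemma exists_rot3 (a b c : ℝ) (h : a^2 + b^2 + c^2 = 1) :
    ∃ R : Matrix (Fin 4) (Fin 4) ℝ,
      Rᵀ * R = 1 ∧
      Rᵀ * Matrix.diagonal ![(1 : ℝ), -1, -1, -1] * R =
        Matrix.diagonal ![(1 : ℝ), -1, -1, -1] ∧
      R.det = 1 ∧
      (∀ j, R 0 j = if j = 0 then 1 else 0) ∧
      R.mulVec ![1, 1, 0, 0] = ![1, a, b, c] := by
  rcases eq_or_ne (b ^ 2 + c ^ 2) 0 with h0 | h0
  · have hb : b = 0 := by nlinarith [sq_nonneg b, sq_nonneg c]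
    have hc : c = 0 := by nlinarith [sq_nonneg b, sq_nonneg c]
    subst hb; subst hc
    have ha : a = 1 ∨ a = -1 := sq_eq_one_iff.mp (by linarith)
    rcases ha with ha | ha <;> subst ha
    · refine ⟨1, by simp, by simp, by simp, ?_, ?_⟩
      · intro j; simp [Matrix.one_apply, eq_comm]
      · simp
    · refine ⟨!![1,0,0,0; 0,-1,0,0; 0,0,-1,0; 0,0,0,1], ?_, ?_, ?_, ?_, ?_⟩
      · ext i j; fin_cases i <;> fin_cases j <;>
          simp [Matrix.mul_apply, Fin.sum_univ_four, Matrix.one_apply, Matrix.vecHead,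
            Matrix.vecTail, Matrix.transpose_apply, Function.comp]
      · ext i j; fin_cases i <;> fin_cases j <;>
          simp [Matrix.mul_apply, Fin.sum_univ_four, Matrix.diagonal_apply, Matrix.vecHead,
            Matrix.vecTail, Matrix.transpose_apply, Function.comp]
      · simp [Matrix.det_succ_row_zero, Fin.sum_univ_succ]
      · intro j; fin_cases j <;> simp [Matrix.vecHead, Matrix.vecTail, Function.comp]
      · funext i; fin_cases i <;>
          simp [Matrix.mulVec, dotProduct, Fin.sum_univ_four, Matrix.vecHead, Matrix.vecTail,
            Function.comp]
  · obtain ⟨s, hspos, hs2⟩ : ∃ s : ℝ, 0 < s ∧ s ^ 2 = b ^ 2 + c ^ 2 := by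
      refine ⟨Real.sqrt (b ^ 2 + c ^ 2), ?_, Real.sq_sqrt (by positivity)⟩
      exact Real.sqrt_pos.mpr (lt_of_le_of_ne (by positivity) (Ne.symm h0))
    have hs : s ≠ 0 := ne_of_gt hspos
    refine ⟨!![1,0,0,0; 0,a,0,s; 0,b,-c/s,-a*b/s; 0,c,b/s,-a*c/s], ?_, ?_, ?_, ?_, ?_⟩
    · ext i j
      fin_cases i <;> fin_cases j <;>
        simp [Matrix.mul_apply, Fin.sum_univ_four, Matrix.one_apply, Matrix.vecHead,
          Matrix.vecTail, Matrix.transpose_apply, Function.comp]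
      all_goals try field_simp
      all_goals first
        | ring1
        | linarith
        | linear_combination a * hs2
        | linear_combination (-a) * hs2
        | linear_combination hs2
        | linear_combination (-1 : ℝ) * hs2
        | linear_combination (s^2 + a^2) * hs2 + s^2 * h
        | nlinarith [hs2, h]
    · ext i j
      fin_cases i <;> fin_cases j <;>
        simp [Matrix.mul_apply, Fin.sum_univ_four, Matrix.diagonal_apply, Matrix.vecHead,
          Matrix.vecTail, Matrix.transpose_apply, Function.comp]
      all_goals try field_simp
      all_goals first
        | ring1
        | linarith
        | linear_combination a * hs2
        | linear_combination (-a) * hs2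
        | linear_combination hs2
        | linear_combination (-1 : ℝ) * hs2
        | linear_combination (s^2 + a^2) * hs2 + s^2 * h
        | linear_combination (-(s^2 + a^2)) * hs2 - s^2 * h
        | nlinarith [hs2, h]
    · simp [Matrix.det_succ_row_zero, Fin.sum_univ_succ]
      field_simp
      first
        | ring1
        | linear_combination hs2 + h
        | linear_combination s^2*h + hs2
        | linear_combination hs2
        | linear_combination h
        | nlinarith [hs2, h]
    · intro j; fin_cases j <;> simp [Matrix.vecHead, Matrix.vecTail, Function.comp]
    · funext i
      fin_cases i <;>
        simp [Matrix.mulVec, dotProduct, Fin.sum_univ_four, Matrix.vecHead, Matrix.vecTail,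
          Function.comp]

private lemma exists_rot (p : Fin 4 → ℝ)
    (hpm : (p 0) ^ 2 - (p 1) ^ 2 - (p 2) ^ 2 - (p 3) ^ 2 = 0) (hp0 : 0 < p 0) :
    ∃ R : Matrix (Fin 4) (Fin 4) ℝ,
      Rᵀ * R = 1 ∧
      Rᵀ * Matrix.diagonal ![(1 : ℝ), -1, -1, -1] * R =
        Matrix.diagonal ![(1 : ℝ), -1, -1, -1] ∧
      R.det = 1 ∧
      (∀ j, R 0 j = if j = 0 then 1 else 0) ∧
      R.mulVec ![p 0, p 0, 0, 0] = p := by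
  have hp0' : p 0 ≠ 0 := ne_of_gt hp0
  have h : (p 1 / p 0) ^ 2 + (p 2 / p 0) ^ 2 + (p 3 / p 0) ^ 2 = 1 := by
    field_simp
    linarith
  obtain ⟨R, hO, hη, hdet, hrow, hv⟩ := exists_rot3 _ _ _ h
  refine ⟨R, hO, hη, hdet, hrow, ?_⟩
  have e1 : (![p 0, p 0, 0, 0] : Fin 4 → ℝ) = p 0 • ![1, 1, 0, 0] := by
    funext i; fin_cases i <;> simp
  rw [e1, Matrix.mulVec_smul, hv]
  funext i; fin_cases i <;> simp <;> field_simp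


/-- The proper orthochronous Lorentz group acts transitively on the forward
light cone: for any `p, q` with `p₀² - p₁² - p₂² - p₃² = 0`, `p₀ > 0`,
`q₀² - q₁² - q₂² - q₃² = 0`, `q₀ > 0`, there is a matrix `A` with `AᵀηA = η`,
`det A = 1`, `A₀₀ > 0` and `A p = q`, where `η = diag(1,-1,-1,-1)`. -/
theorem lorentz_transitive_on_light_cone
    (p q : Fin 4 → ℝ)
    (hpm : (p 0) ^ 2 - (p 1) ^ 2 - (p 2) ^ 2 - (p 3) ^ 2 = 0) (hp0 : 0 < p 0)
    (hqm : (q 0) ^ 2 - (q 1) ^ 2 - (q 2) ^ 2 - (q 3) ^ 2 = 0) (hq0 : 0 < q 0) :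
    ∃ A : Matrix (Fin 4) (Fin 4) ℝ,
      Aᵀ * Matrix.diagonal ![(1 : ℝ), -1, -1, -1] * A =
          Matrix.diagonal ![(1 : ℝ), -1, -1, -1] ∧
      A.det = 1 ∧ 0 < A 0 0 ∧ A.mulVec p = q := by
  obtain ⟨Rp, hpO, hpη, hpdet, hprow, hpv⟩ := exists_rot p hpm hp0
  obtain ⟨Rq, hqO, hqη, hqdet, hqrow, hqv⟩ := exists_rot q hqm hq0
  set η : Matrix (Fin 4) (Fin 4) ℝ := Matrix.diagonal ![(1 : ℝ), -1, -1, -1] with hη_def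
  have hp0' : p 0 ≠ 0 := ne_of_gt hp0
  have hq0' : q 0 ≠ 0 := ne_of_gt hq0
  obtain ⟨ch, sh, key, hchpos, hcs⟩ :
      ∃ ch sh : ℝ, ch ^ 2 - sh ^ 2 = 1 ∧ 0 < ch ∧ (ch + sh) * p 0 = q 0 := by
    refine ⟨(q 0 / p 0 + p 0 / q 0) / 2, (q 0 / p 0 - p 0 / q 0) / 2, ?_, ?_, ?_⟩
    · field_simp; ring
    · have h1 : 0 < q 0 / p 0 := div_pos hq0 hp0
      have h2 : 0 < p 0 / q 0 := div_pos hp0 hq0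
      linarith
    · field_simp; ring
  set B : Matrix (Fin 4) (Fin 4) ℝ := !![ch,sh,0,0; sh,ch,0,0; 0,0,1,0; 0,0,0,1] with hB_def
  have hBη : Bᵀ * η * B = η := by
    rw [hB_def, hη_def]
    ext i j
    fin_cases i <;> fin_cases j <;>
      simp [Matrix.mul_apply, Fin.sum_univ_four, Matrix.diagonal_apply, Matrix.vecHead,
        Matrix.vecTail, Matrix.transpose_apply, Function.comp]
    all_goals first | linear_combination key | linear_combination (-1 : ℝ) * key | linarith [key] | nlinarith [key]
  have hBdet : B.det = 1 := by
    rw [hB_def]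
    simp [Matrix.det_succ_row_zero, Fin.sum_univ_succ, Matrix.vecHead, Matrix.vecTail,
      Function.comp, Fin.succAbove]
    first | linear_combination key | linear_combination (-1 : ℝ) * key
  have hBv : B.mulVec ![p 0, p 0, 0, 0] = ![q 0, q 0, 0, 0] := by
    rw [hB_def]
    funext i
    fin_cases i <;>
      simp [Matrix.mulVec, dotProduct, Fin.sum_univ_four, Matrix.vecHead, Matrix.vecTail,
        Function.comp]
    all_goals first | linear_combination hcs | linear_combination (-1 : ℝ) * hcs
  refine ⟨Rq * B * Rpᵀ, ?_, ?_, ?_, ?_⟩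
  · have hqη' : Bᵀ * (Rqᵀ * η * Rq) * B = η := by rw [hqη]; exact hBη
    have hpη' : Rp * η * Rpᵀ = η := by
      have h1 : Rp * Rpᵀ = 1 := mul_eq_one_comm.mpr hpO
      calc Rp * η * Rpᵀ = Rp * (Rpᵀ * η * Rp) * Rpᵀ := by rw [hpη]
        _ = (Rp * Rpᵀ) * η * (Rp * Rpᵀ) := by simp only [Matrix.mul_assoc]
        _ = η := by rw [h1]; simp
    calc (Rq * B * Rpᵀ)ᵀ * η * (Rq * B * Rpᵀ)
        = Rp * (Bᵀ * (Rqᵀ * η * Rq) * B) * Rpᵀ := by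
          simp only [Matrix.transpose_mul, Matrix.transpose_transpose, Matrix.mul_assoc]
      _ = Rp * η * Rpᵀ := by rw [hqη']
      _ = η := hpη'
  · simp [Matrix.det_mul, Matrix.det_transpose, hqdet, hpdet, hBdet]
  · have hA00 : (Rq * B * Rpᵀ) 0 0 = ch := by
      simp [Matrix.mul_apply, Fin.sum_univ_four, hqrow, hprow, Matrix.transpose_apply, hB_def,
        Matrix.vecHead, Matrix.vecTail, Function.comp]
    rw [hA00]; exact hchpos
  · have hv : Rpᵀ.mulVec p = ![p 0, p 0, 0, 0] := by
      conv_lhs => rw [← hpv]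
      rw [Matrix.mulVec_mulVec, hpO, Matrix.one_mulVec]
    rw [Matrix.mul_assoc, ← Matrix.mulVec_mulVec, ← Matrix.mulVec_mulVec, hv, hBv, hqv]
end
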